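/- arXiv:1309.4230 — 4 statements merged into one kernel-verified Lean document; each statement's English description precedes it below -/
import Mathlib

section
/- Let V be a finite-dimensional complex inner product space (inner product conjugate-linear in the first argument), V* its complex dual, and W := V × V*. Define the complex bilinear form Q on W by Q((a, φ), (b, ψ)) := ψ(a) + φ(b), and let ♭ : V → V* be the conjugate-linear bijection v ↦ ⟪v, ·⟫. Define J : W → W by J(a, φ) := (♭⁻¹(φ), ♭(a)). Then: (1) Q is symmetric and nondegenerate, and both V × {0} and {0} × V* are isotropic for Q; (2) J is a conjugate-linear involution on W interchanging V × {0} and {0} × V*, with fixed-point set {(a, ♭(a)) | a ∈ V}; (3) for every α = (a, φ) ∈ W one has Q(α, J α) = ‖a‖² + ‖♭⁻¹(φ)‖², which is real, nonnegative, and zero iff α = 0; (4) the projection π₊ := ½(id + J) is injective on V × {0}; consequently, for any set S and any function κ : S → W whose range lies in V × {0}, if π₊ ∘ κ = 0 then κ = 0. -/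
/-- For a finite-dimensional complex inner product space `V`, the space
`W = V × V*` with the bilinear form `Q((a,φ),(b,ψ)) = ψ(a) + φ(b)` and the conjugate-linear
involution `J(a,φ) = (♭⁻¹ φ, ♭ a)` (where `♭ v = ⟪v, ·⟫`): `Q` is symmetric, nondegenerate,
with `V × 0` and `0 × V*` isotropic; `J` is a conjugate-linear involution interchanging the
two factors with fixed set `{(a, ♭a)}`; `Q(α, Jα) = ‖a‖² + ‖♭⁻¹φ‖²` is real, nonnegative and
zero iff `α = 0`; and `π₊ = ½(id + J)` is injective on `V × 0`, so any `κ` with range in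
`V × 0` and `π₊ ∘ κ = 0` vanishes. -/
theorem stmt4 (V : Type*) [NormedAddCommGroup V] [InnerProductSpace ℂ V]
    [FiniteDimensional ℂ V]
    (flat : V ≃ Module.Dual ℂ V)
    (hflat : ∀ v w : V, flat v w = (inner ℂ v w : ℂ))
    (Q : (V × Module.Dual ℂ V) → (V × Module.Dual ℂ V) → ℂ)
    (hQ : ∀ p q : V × Module.Dual ℂ V, Q p q = q.2 p.1 + p.2 q.1)
    (Jm : (V × Module.Dual ℂ V) → (V × Module.Dual ℂ V))
    (hJ : ∀ p : V × Module.Dual ℂ V, Jm p = (flat.symm p.2, flat p.1)) :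
    -- (1)
    ((∀ p q, Q p q = Q q p) ∧
     (∀ p, (∀ q, Q p q = 0) → p = 0) ∧
     (∀ a b : V, Q (a, 0) (b, 0) = 0) ∧
     (∀ φ ψ : Module.Dual ℂ V, Q (0, φ) (0, ψ) = 0)) ∧
    -- (2)
    ((∀ p q, Jm (p + q) = Jm p + Jm q) ∧
     (∀ (c : ℂ) p, Jm (c • p) = (starRingEnd ℂ c) • Jm p) ∧
     (∀ p, Jm (Jm p) = p) ∧
     (∀ a : V, Jm (a, 0) = (0, flat a)) ∧
     (∀ φ : Module.Dual ℂ V, Jm (0, φ) = (flat.symm φ, 0)) ∧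
     (∀ p, Jm p = p ↔ ∃ a : V, p = (a, flat a))) ∧
    -- (3)
    ((∀ (a : V) (φ : Module.Dual ℂ V),
        Q (a, φ) (Jm (a, φ)) = ((‖a‖ ^ 2 + ‖flat.symm φ‖ ^ 2 : ℝ) : ℂ)) ∧
     (∀ (a : V) (φ : Module.Dual ℂ V),
        (Q (a, φ) (Jm (a, φ))).im = 0 ∧ 0 ≤ (Q (a, φ) (Jm (a, φ))).re) ∧
     (∀ (a : V) (φ : Module.Dual ℂ V),
        Q (a, φ) (Jm (a, φ)) = 0 ↔ (a, φ) = (0 : V × Module.Dual ℂ V))) ∧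
    -- (4)
    ((Function.Injective fun a : V =>
        (2⁻¹ : ℂ) • (((a, 0) : V × Module.Dual ℂ V) + Jm (a, 0))) ∧
     ∀ (S : Type*) (κ : S → V × Module.Dual ℂ V),
       (∀ s, (κ s).2 = 0) → (∀ s, (2⁻¹ : ℂ) • (κ s + Jm (κ s)) = 0) → ∀ s, κ s = 0) := by

  -- basic properties of flat
  have h0 : flat (0 : V) = 0 := LinearMap.ext fun w => by simp [hflat]
  have hadd : ∀ a b : V, flat (a + b) = flat a + flat b := fun a b =>
    LinearMap.ext fun w => by simp [hflat, inner_add_left]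
  have hsmul : ∀ (c : ℂ) (a : V), flat (c • a) = (starRingEnd ℂ c) • flat a := fun c a =>
    LinearMap.ext fun w => by simp [hflat, inner_smul_left, mul_comm]
  have hs0 : flat.symm (0 : Module.Dual ℂ V) = 0 := by
    rw [← h0, Equiv.symm_apply_apply]
  have hsadd : ∀ φ ψ : Module.Dual ℂ V, flat.symm (φ + ψ) = flat.symm φ + flat.symm ψ := by
    intro φ ψ
    apply flat.injective
    rw [Equiv.apply_symm_apply, hadd, Equiv.apply_symm_apply, Equiv.apply_symm_apply]
  have hssmul : ∀ (c : ℂ) (φ : Module.Dual ℂ V),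
      flat.symm (c • φ) = (starRingEnd ℂ c) • flat.symm φ := by
    intro c φ
    apply flat.injective
    rw [Equiv.apply_symm_apply, hsmul, Equiv.apply_symm_apply, Complex.conj_conj]
  -- Q(α, Jα)
  have hQJ : ∀ (a : V) (φ : Module.Dual ℂ V),
      Q (a, φ) (Jm (a, φ)) = ((‖a‖ ^ 2 + ‖flat.symm φ‖ ^ 2 : ℝ) : ℂ) := by
    intro a φ
    rw [hQ, hJ]
    simp only
    have h1 : (flat a) a = (‖a‖ : ℂ) ^ 2 := by
      rw [hflat]; exact inner_self_eq_norm_sq_to_K (𝕜 := ℂ) a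
    have h2 : φ (flat.symm φ) = (‖flat.symm φ‖ : ℂ) ^ 2 := by
      have h := hflat (flat.symm φ) (flat.symm φ)
      rw [Equiv.apply_symm_apply] at h
      rw [h]; exact inner_self_eq_norm_sq_to_K (𝕜 := ℂ) (flat.symm φ)
    rw [h1, h2]
    push_cast
    ring
  refine ⟨⟨?_, ?_, ?_, ?_⟩, ⟨?_, ?_, ?_, ?_, ?_, ?_⟩, ⟨hQJ, ?_, ?_⟩, ?_, ?_⟩
  · intro p q; rw [hQ, hQ]; ring
  · -- nondegenerate
    intro p hp
    have h1 : p.2 = 0 := by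
      ext b
      have := hp (b, 0)
      rw [hQ] at this
      simpa using this
    have h2 : p.1 = 0 := by
      have := hp (0, flat p.1)
      rw [hQ] at this
      simp only [h1, LinearMap.zero_apply, add_zero, map_zero] at this
      rw [hflat] at this
      exact inner_self_eq_zero (𝕜 := ℂ) |>.mp (by simpa using this)
    exact Prod.ext h2 h1
  · intro a b; rw [hQ]; simp
  · intro φ ψ; rw [hQ]; simp
  · intro p q; rw [hJ, hJ, hJ]; exact Prod.ext (hsadd _ _) (hadd _ _)
  · intro c p; rw [hJ, hJ]
    exact Prod.ext (hssmul _ _) (hsmul _ _)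
  · intro p; rw [hJ, hJ]; simp
  · intro a; rw [hJ]; simp [hs0]
  · intro φ; rw [hJ]; simp [h0]
  · intro p
    rw [hJ]
    constructor
    · intro h
      refine ⟨p.1, ?_⟩
      have := congrArg Prod.snd h
      simp only at this
      exact Prod.ext rfl this.symm
    · rintro ⟨a, rfl⟩
      simp
  · intro a φ
    rw [hQJ]
    refine ⟨Complex.ofReal_im _, ?_⟩
    rw [Complex.ofReal_re]
    positivity
  · intro a φ
    rw [hQJ]
    constructor
    · intro h
      have h' : (‖a‖ ^ 2 + ‖flat.symm φ‖ ^ 2 : ℝ) = 0 := by exact_mod_cast h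
      have ha : ‖a‖ = 0 := by nlinarith [sq_nonneg ‖a‖, sq_nonneg ‖flat.symm φ‖, norm_nonneg a, norm_nonneg (flat.symm φ)]
      have hb : ‖flat.symm φ‖ = 0 := by nlinarith [sq_nonneg ‖a‖, sq_nonneg ‖flat.symm φ‖, norm_nonneg a, norm_nonneg (flat.symm φ)]
      have ha' : a = 0 := norm_eq_zero.mp ha
      have hb' : flat.symm φ = 0 := norm_eq_zero.mp hb
      have hφ : φ = 0 := by
        have := congrArg flat hb'
        rwa [Equiv.apply_symm_apply, h0] at this
      simp [ha', hφ]
    · intro h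
      have ha : a = 0 := congrArg Prod.fst h
      have hφ : φ = 0 := congrArg Prod.snd h
      simp [ha, hφ, hs0]
  · intro a b hab
    simp only [hJ, hs0] at hab
    have := congrArg Prod.fst hab
    simp only [Prod.smul_mk, Prod.mk_add_mk, add_zero] at this
    have h2 : (2⁻¹ : ℂ) • a = (2⁻¹ : ℂ) • b := this
    have := congrArg (fun x => (2 : ℂ) • x) h2
    simpa [smul_smul] using this
  · intro S κ h2 hp s
    have hJs : Jm (κ s) = (flat.symm 0, flat (κ s).1) := by rw [hJ, h2 s]
    have := congrArg Prod.fst (hp s)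
    rw [hJs] at this
    simp only [hs0, Prod.smul_mk, Prod.mk_add_mk, add_zero, Prod.fst_add] at this
    have h1 : (2⁻¹ : ℂ) • ((κ s).1 + 0) = 0 := this
    rw [add_zero] at h1
    have h1' : (κ s).1 = 0 := by
      have := congrArg (fun x => (2 : ℂ) • x) h1
      simpa [smul_smul] using this
    exact Prod.ext h1' (h2 s)
end

section
/- Let F₁, F₂, G be complex Banach spaces and E := F₁ × F₂. Let U be an open neighborhood of 0 in E and h : U → G an analytic map such that h(t, 0) = 0 for all t ∈ F₁ with (t, 0) ∈ U. Then there exist an open neighborhood U' ⊆ U of 0 and an analytic map f : U' → L(F₂, G) (the Banach space of continuous linear maps from F₂ to G with the operator norm) such that h(t, s) = f(t, s)(s) for all (t, s) ∈ U'. -/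
open Fin Function Nat
set_option linter.unusedSectionVars false

noncomputable section

namespace Stmt5Aux

variable {F₁ F₂ G : Type*}
  [NormedAddCommGroup F₁] [NormedSpace ℂ F₁]
  [NormedAddCommGroup F₂] [NormedSpace ℂ F₂]
  [NormedAddCommGroup G] [NormedSpace ℂ G] [CompleteSpace G]

/-- projection `(t,s) ↦ (t,0)` -/
def pr : (F₁ × F₂) →L[ℂ] (F₁ × F₂) :=
  (ContinuousLinearMap.inl ℂ F₁ F₂).comp (ContinuousLinearMap.fst ℂ F₁ F₂)

@[simp] lemma pr_apply (x : F₁ × F₂) : (pr x : F₁ × F₂) = (x.1, 0) := rfl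

lemma pr_norm_le : ‖(pr : (F₁ × F₂) →L[ℂ] (F₁ × F₂))‖ ≤ 1 := by
  refine ContinuousLinearMap.opNorm_le_bound _ zero_le_one fun x => ?_
  rw [one_mul, pr_apply]
  simp only [Prod.norm_def, norm_zero]
  exact max_le (le_max_left _ _) (le_max_of_le_right (norm_nonneg _))

lemma inr_norm_le : ‖(ContinuousLinearMap.inr ℂ F₁ F₂)‖ ≤ 1 := by
  refine ContinuousLinearMap.opNorm_le_bound _ zero_le_one fun x => ?_
  rw [one_mul, ContinuousLinearMap.inr_apply]
  simp only [Prod.norm_def, norm_zero]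
  exact max_le (norm_nonneg _) le_rfl

/-- symmetrization of a formal multilinear series -/
def sy (p : FormalMultilinearSeries ℂ (F₁ × F₂) G) :
    FormalMultilinearSeries ℂ (F₁ × F₂) G :=
  fun n => (n ! : ℂ)⁻¹ • ∑ σ : Equiv.Perm (Fin n), (p n).domDomCongr σ

lemma sy_apply (p : FormalMultilinearSeries ℂ (F₁ × F₂) G) (n : ℕ)
    (v : Fin n → F₁ × F₂) :
    sy p n v = (n ! : ℂ)⁻¹ • ∑ σ : Equiv.Perm (Fin n), p n (fun i => v (σ i)) := by
  simp [sy, ContinuousMultilinearMap.sum_apply]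

lemma sy_diag (p : FormalMultilinearSeries ℂ (F₁ × F₂) G) (n : ℕ) (x : F₁ × F₂) :
    sy p n (fun _ => x) = p n (fun _ => x) := by
  rw [sy_apply]
  rw [Finset.sum_const, Finset.card_univ, Fintype.card_perm, Fintype.card_fin]
  rw [← Nat.cast_smul_eq_nsmul ℂ, smul_smul, inv_mul_cancel₀, one_smul]
  exact_mod_cast Nat.factorial_ne_zero n

lemma sy_symm (p : FormalMultilinearSeries ℂ (F₁ × F₂) G) (n : ℕ)
    (σ : Equiv.Perm (Fin n)) (v : Fin n → F₁ × F₂) :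
    sy p n (fun i => v (σ i)) = sy p n v := by
  rw [sy_apply, sy_apply]
  congr 1
  exact Fintype.sum_equiv (Equiv.mulLeft σ) _ _ fun τ => rfl

lemma sy_norm (p : FormalMultilinearSeries ℂ (F₁ × F₂) G) (n : ℕ) :
    ‖sy p n‖ ≤ ‖p n‖ := by
  rw [sy, norm_smul ((n ! : ℂ))⁻¹ (∑ σ : Equiv.Perm (Fin n), (p n).domDomCongr σ)]
  have h1 : ‖((n ! : ℂ))⁻¹‖ = ((n ! : ℝ))⁻¹ := by
    rw [norm_inv]; norm_num
  rw [h1]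
  calc ((n !: ℝ))⁻¹ * ‖∑ σ : Equiv.Perm (Fin n), (p n).domDomCongr σ‖
      ≤ ((n !: ℝ))⁻¹ * ∑ σ : Equiv.Perm (Fin n), ‖(p n).domDomCongr σ‖ := by
        gcongr; exact norm_sum_le _ _
    _ = ((n !: ℝ))⁻¹ * (n ! * ‖p n‖) := by
        rw [Finset.sum_congr rfl (fun σ _ => ContinuousMultilinearMap.norm_domDomCongr ℂ _ _ σ (p n)),
          Finset.sum_const, Finset.card_univ, Fintype.card_perm, Fintype.card_fin, nsmul_eq_mul]
    _ = ‖p n‖ := by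
        rw [← mul_assoc, inv_mul_cancel₀ (by positivity), one_mul]


/-- slot maps: `id` for slots below `j` and the last slot, `pr` otherwise. -/
def cmap (m : ℕ) (j : Fin (m + 1)) : Fin (m + 1) → ((F₁ × F₂) →L[ℂ] (F₁ × F₂)) :=
  fun i => if (i : ℕ) < (j : ℕ) ∨ (i : ℕ) = m then ContinuousLinearMap.id ℂ _ else pr

lemma cmap_norm_le (m : ℕ) (j : Fin (m + 1)) (i : Fin (m + 1)) :
    ‖(cmap m j i : (F₁ × F₂) →L[ℂ] (F₁ × F₂))‖ ≤ 1 := by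
  unfold cmap
  split
  · exact ContinuousLinearMap.norm_id_le
  · exact pr_norm_le

/-- postcomposition with `inr : F₂ → F₁ × F₂` -/
def post : ((F₁ × F₂) →L[ℂ] G) →L[ℂ] (F₂ →L[ℂ] G) :=
  (ContinuousLinearMap.compL ℂ F₂ (F₁ × F₂) G).flip (ContinuousLinearMap.inr ℂ F₁ F₂)

@[simp] lemma post_apply (L : (F₁ × F₂) →L[ℂ] G) (v : F₂) : post L v = L (0, v) := rfl

lemma post_norm_le (L : (F₁ × F₂) →L[ℂ] G) : ‖post L‖ ≤ ‖L‖ := by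
  have := ContinuousLinearMap.opNorm_comp_le L (ContinuousLinearMap.inr ℂ F₁ F₂)
  refine le_trans ?_ (this.trans ?_)
  · exact le_rfl
  · calc ‖L‖ * ‖ContinuousLinearMap.inr ℂ F₁ F₂‖ ≤ ‖L‖ * 1 := by gcongr; exact inr_norm_le
      _ = ‖L‖ := mul_one _

/-- the `j`-th piece of degree `m` of the factor series -/
def Aj (p : FormalMultilinearSeries ℂ (F₁ × F₂) G) (m : ℕ) (j : Fin (m + 1)) :
    ContinuousMultilinearMap ℂ (fun _ : Fin (m + 1) => F₁ × F₂) G :=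
  (sy p (m + 1)).compContinuousLinearMap (cmap m j)

lemma Aj_norm_le (p : FormalMultilinearSeries ℂ (F₁ × F₂) G) (m : ℕ) (j : Fin (m + 1)) :
    ‖Aj p m j‖ ≤ ‖p (m + 1)‖ := by
  refine le_trans (ContinuousMultilinearMap.norm_compContinuousLinearMap_le _ _) ?_
  calc ‖sy p (m + 1)‖ * ∏ i, ‖(cmap m j i : (F₁ × F₂) →L[ℂ] (F₁ × F₂))‖
      ≤ ‖p (m + 1)‖ * 1 := by
        refine mul_le_mul (sy_norm p _) ?_ (by positivity) (norm_nonneg _)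
        exact Finset.prod_le_one (fun i _ => norm_nonneg _) (fun i _ => cmap_norm_le m j i)
    _ = ‖p (m + 1)‖ := mul_one _

set_option maxHeartbeats 1000000 in
/-- the factor series -/
def qs (p : FormalMultilinearSeries ℂ (F₁ × F₂) G) :
    FormalMultilinearSeries ℂ (F₁ × F₂) (F₂ →L[ℂ] G) :=
  fun m => ∑ j : Fin (m + 1), post.compContinuousMultilinearMap ((Aj p m j).curryRight)

set_option maxHeartbeats 1000000 in
lemma qs_norm_le (p : FormalMultilinearSeries ℂ (F₁ × F₂) G) (m : ℕ) :
    ‖qs p m‖ ≤ (m + 1) * ‖p (m + 1)‖ := by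
  unfold qs
  refine le_trans (norm_sum_le Finset.univ
    (fun j : Fin (m + 1) => post.compContinuousMultilinearMap ((Aj p m j).curryRight))) ?_
  have hterm : ∀ j : Fin (m + 1),
      ‖post.compContinuousMultilinearMap ((Aj p m j).curryRight)‖ ≤ ‖p (m + 1)‖ := by
    intro j
    refine le_trans (ContinuousLinearMap.norm_compContinuousMultilinearMap_le _ _) ?_
    have hpost : ‖(post : ((F₁ × F₂) →L[ℂ] G) →L[ℂ] (F₂ →L[ℂ] G))‖ ≤ 1 :=
      ContinuousLinearMap.opNorm_le_bound _ zero_le_one fun L => by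
        rw [one_mul]; exact post_norm_le L
    calc ‖post‖ * ‖(Aj p m j).curryRight‖
        ≤ 1 * ‖(Aj p m j).curryRight‖ := by gcongr
      _ = ‖Aj p m j‖ := by rw [one_mul, ContinuousMultilinearMap.curryRight_norm]
      _ ≤ ‖p (m + 1)‖ := Aj_norm_le p m j
  calc ∑ j : Fin (m + 1), ‖post.compContinuousMultilinearMap ((Aj p m j).curryRight)‖
      ≤ ∑ _j : Fin (m + 1), ‖p (m + 1)‖ := Finset.sum_le_sum fun j _ => hterm j
    _ = (m + 1) * ‖p (m + 1)‖ := by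
        rw [Finset.sum_const, Finset.card_univ, Fintype.card_fin, nsmul_eq_mul]
        push_cast; ring

set_option maxHeartbeats 1000000 in
lemma qs_diag (p : FormalMultilinearSeries ℂ (F₁ × F₂) G) (m : ℕ) (x : F₁ × F₂) :
    qs p m (fun _ => x) x.2
      = p (m + 1) (fun _ => x) - p (m + 1) (fun _ => (x.1, (0 : F₂))) := by
  set z : F₁ × F₂ := (x.1, 0) with hz
  set y : F₁ × F₂ := (0, x.2) with hy
  set D : ℕ → Fin (m + 1) → F₁ × F₂ := fun k i => if (i : ℕ) < k then x else z with hD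
  have key : ∀ j : Fin (m + 1),
      (post.compContinuousMultilinearMap ((Aj p m j).curryRight)) (fun _ => x) x.2
        = sy p (m + 1) (D ((j : ℕ) + 1)) - sy p (m + 1) (D (j : ℕ)) := by
    intro j
    have e1 : (post.compContinuousMultilinearMap ((Aj p m j).curryRight)) (fun _ => x) x.2
        = Aj p m j (Fin.snoc (fun _ : Fin m => x) y) := rfl
    have e2 : (fun i => (cmap m j i : (F₁ × F₂) →L[ℂ] (F₁ × F₂))
          ((Fin.snoc (fun _ : Fin m => x) y : Fin (m+1) → F₁ × F₂) i))
        = Function.update (D (j : ℕ)) (Fin.last m) y := by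
      funext i
      by_cases hi : (i : ℕ) = m
      · have hlast : i = Fin.last m := Fin.ext hi
        subst hlast
        rw [Function.update_self, Fin.snoc_last]
        simp [cmap]
      · have him : (i : ℕ) < m := lt_of_le_of_ne (Nat.lt_succ_iff.mp i.isLt) hi
        have hne : i ≠ Fin.last m := fun h => hi (by rw [h]; rfl)
        rw [Function.update_of_ne hne]
        have hcast : i = Fin.castSucc ⟨(i : ℕ), him⟩ := Fin.ext rfl
        rw [hcast, Fin.snoc_castSucc]
        simp only [cmap, hD, Fin.coe_castSucc]
        by_cases hij : (i : ℕ) < (j : ℕ)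
        · simp [hij]
        · simp [hij, hi, hz]
    have hyxz : y = x - z := by
      rw [hy, hz]; ext <;> simp
    have e3 : Aj p m j (Fin.snoc (fun _ : Fin m => x) y)
        = sy p (m + 1) (Function.update (D (j : ℕ)) (Fin.last m) y) := by
      rw [← e2]; rfl
    rw [e1, e3, hyxz, ContinuousMultilinearMap.map_update_sub]
    congr 1
    · have e4 : Function.update (D (j : ℕ)) (Fin.last m) x
          = fun i => D ((j : ℕ) + 1) (Equiv.swap j (Fin.last m) i) := by
        funext i
        by_cases h1 : i = Fin.last m
        · subst h1
          rw [Function.update_self, Equiv.swap_apply_right]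
          simp [hD]
        · rw [Function.update_of_ne h1]
          by_cases h2 : i = j
          · subst h2
            rw [Equiv.swap_apply_left]
            have him : (i : ℕ) < m :=
              lt_of_le_of_ne (Nat.lt_succ_iff.mp i.isLt) (fun h => h1 (Fin.ext h))
            simp only [hD, Fin.val_last]
            rw [if_neg (by omega), if_neg (by omega)]
          · rw [Equiv.swap_apply_of_ne_of_ne h2 h1]
            simp only [hD]
            have hvne : (i : ℕ) ≠ (j : ℕ) := fun h => h2 (Fin.ext h)
            by_cases h3 : (i : ℕ) < (j : ℕ)
            · rw [if_pos h3, if_pos (by omega)]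
            · rw [if_neg h3, if_neg (by omega)]
      rw [e4, sy_symm]
    · congr 1
      funext i
      by_cases h1 : i = Fin.last m
      · subst h1
        rw [Function.update_self]
        simp only [hD, Fin.val_last]
        rw [if_neg (by omega)]
      · rw [Function.update_of_ne h1]
  have hsum : qs p m (fun _ => x) x.2
      = ∑ j : Fin (m + 1),
          ((post.compContinuousMultilinearMap ((Aj p m j).curryRight)) (fun _ => x) x.2) := by
    rw [qs, ContinuousMultilinearMap.sum_apply, ContinuousLinearMap.sum_apply]
  rw [hsum, Finset.sum_congr rfl (fun j _ => key j),
    Fin.sum_univ_eq_sum_range (fun k => sy p (m + 1) (D (k + 1)) - sy p (m + 1) (D k)),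
    Finset.sum_range_sub (fun k => sy p (m + 1) (D k))]
  have dm : D (m + 1) = fun _ => x := funext fun i => if_pos i.isLt
  have d0 : D 0 = fun _ => z := funext fun i => if_neg (by omega)
  rw [dm, d0, sy_diag, sy_diag]

end Stmt5Aux

end

open scoped ENNReal NNReal in
open Stmt5Aux in
set_option maxHeartbeats 1000000 in
/-- Miyajima factorization lemma. Let `F₁, F₂, G` be complex Banach spaces,
`U` an open neighborhood of `0` in `E = F₁ × F₂`, and `h : U → G` analytic with
`h(t, 0) = 0`. Then on a smaller open neighborhood `U'` of `0` there is an analytic map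
`f : U' → L(F₂, G)` with `h(t, s) = f(t, s)(s)`. -/
theorem stmt5 (F₁ F₂ G : Type*)
    [NormedAddCommGroup F₁] [NormedSpace ℂ F₁] [CompleteSpace F₁]
    [NormedAddCommGroup F₂] [NormedSpace ℂ F₂] [CompleteSpace F₂]
    [NormedAddCommGroup G] [NormedSpace ℂ G] [CompleteSpace G]
    (U : Set (F₁ × F₂)) (hUopen : IsOpen U) (hU0 : (0 : F₁ × F₂) ∈ U)
    (h : F₁ × F₂ → G) (hh : AnalyticOnNhd ℂ h U)
    (hvan : ∀ t : F₁, (t, (0 : F₂)) ∈ U → h (t, 0) = 0) :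
    ∃ (U' : Set (F₁ × F₂)) (f : F₁ × F₂ → (F₂ →L[ℂ] G)),
      U' ⊆ U ∧ IsOpen U' ∧ (0 : F₁ × F₂) ∈ U' ∧
      AnalyticOnNhd ℂ f U' ∧
      ∀ p ∈ U', h p = f p p.2 := by
  obtain ⟨pser, hps⟩ := hh 0 hU0
  obtain ⟨r0, hpb0⟩ := hps
  obtain ⟨ε, ε0, hball⟩ := EMetric.isOpen_iff.1 hUopen 0 hU0
  set r1 : ℝ≥0∞ := min r0 ε with hr1
  have hr1pos : 0 < r1 := lt_min hpb0.r_pos ε0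
  have hpb : HasFPowerSeriesOnBall h pser 0 r1 := hpb0.mono hr1pos (min_le_left _ _)
  have hb1U : EMetric.ball (0 : F₁ × F₂) r1 ⊆ U :=
    (EMetric.ball_subset_ball (min_le_right _ _)).trans hball
  have hrad : 0 < (qs pser).radius := by
    have hr : 0 < pser.radius := hpb0.radius_pos
    obtain ⟨r', hr'0, hr'lt⟩ := ENNReal.lt_iff_exists_nnreal_btwn.1 hr
    have hr'0'' : 0 < r' := by exact_mod_cast hr'0
    have hr'0' : 0 < (r' : ℝ) := by exact_mod_cast hr'0
    obtain ⟨C, hC0, hC⟩ := pser.norm_mul_pow_le_of_lt_radius hr'lt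
    have hbound : ∀ m : ℕ, ‖qs pser m‖ * ((r' / 2 : ℝ≥0) : ℝ) ^ m ≤ C / r' := by
      intro m
      have h1 : ‖qs pser m‖ ≤ (m + 1) * ‖pser (m + 1)‖ := qs_norm_le pser m
      have hpow : ((r' / 2 : ℝ≥0) : ℝ) ^ m = (r' : ℝ) ^ m / 2 ^ m := by
        push_cast; rw [div_pow]
      calc ‖qs pser m‖ * ((r' / 2 : ℝ≥0) : ℝ) ^ m
          ≤ ((m + 1) * ‖pser (m + 1)‖) * ((r' : ℝ) ^ m / 2 ^ m) := by
            rw [hpow]; exact mul_le_mul_of_nonneg_right h1 (by positivity)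
        _ = ((m + 1 : ℝ) / 2 ^ m) * (‖pser (m + 1)‖ * (r' : ℝ) ^ m) := by ring
        _ ≤ 1 * (C / r') := by
            refine mul_le_mul ?_ ?_ (by positivity) zero_le_one
            · rw [div_le_one (by positivity)]
              exact_mod_cast Nat.succ_le_of_lt (Nat.lt_two_pow_self (n := m))
            · rw [le_div_iff₀ hr'0']
              calc ‖pser (m + 1)‖ * (r' : ℝ) ^ m * r'
                  = ‖pser (m + 1)‖ * (r' : ℝ) ^ (m + 1) := by ring
                _ ≤ C := hC (m + 1)
        _ = C / r' := one_mul _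
    have hle := (qs pser).le_radius_of_bound (C / r') hbound
    refine lt_of_lt_of_le ?_ hle
    exact ENNReal.coe_pos.mpr (by positivity)
  have hq := (qs pser).hasFPowerSeriesOnBall hrad
  set ρ := min r1 (qs pser).radius with hρ
  have hρpos : 0 < ρ := lt_min hr1pos hrad
  refine ⟨EMetric.ball 0 ρ, (qs pser).sum, ?_, EMetric.isOpen_ball,
    EMetric.mem_ball_self hρpos, ?_, ?_⟩
  · exact (EMetric.ball_subset_ball (min_le_left _ _)).trans hb1U
  · exact (hq.mono hρpos (min_le_right _ _)).analyticOnNhd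
  · intro x hx
    have hx1 : x ∈ Metric.eball (0 : F₁ × F₂) r1 :=
      EMetric.ball_subset_ball (min_le_left _ _) hx
    have hxq : x ∈ EMetric.ball (0 : F₁ × F₂) (qs pser).radius :=
      EMetric.ball_subset_ball (min_le_right _ _) hx
    have hzmem : ((x.1, 0) : F₁ × F₂) ∈ Metric.eball (0 : F₁ × F₂) r1 := by
      rw [EMetric.mem_ball] at hx1 ⊢
      refine lt_of_le_of_lt ?_ hx1
      rw [Prod.edist_eq, Prod.edist_eq]
      exact max_le (le_max_left _ _) (by simp)
    have hsum1 : HasSum (fun n => pser n (fun _ => x)) (h x) := by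
      have := hpb.hasSum hx1
      rwa [zero_add] at this
    have hsum2 : HasSum (fun n => pser n (fun _ => ((x.1, 0) : F₁ × F₂))) 0 := by
      have := hpb.hasSum hzmem
      rw [zero_add] at this
      rwa [hvan x.1 (hb1U hzmem)] at this
    have hsub := hsum1.sub hsum2
    rw [sub_zero] at hsub
    have hg0 : pser 0 (fun _ => x) - pser 0 (fun _ => ((x.1, 0) : F₁ × F₂)) = 0 := by
      rw [Subsingleton.elim (fun _ : Fin 0 => x) (fun _ => ((x.1, 0) : F₁ × F₂)), sub_self]
    have hshift : HasSum
        (fun m => pser (m + 1) (fun _ => x) - pser (m + 1) (fun _ => ((x.1, 0) : F₁ × F₂)))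
        (h x) := by
      refine (hasSum_nat_add_iff
        (f := fun n => pser n (fun _ => x) - pser n (fun _ => ((x.1, 0) : F₁ × F₂))) 1).2 ?_
      simpa [hg0] using hsub
    have hsumq : HasSum (fun m => qs pser m (fun _ => x)) ((qs pser).sum x) := by
      have := hq.hasSum hxq
      rwa [zero_add] at this
    have happ := hsumq.mapL ((ContinuousLinearMap.apply ℂ G) x.2)
    have hfinal : HasSum (fun m => qs pser m (fun _ => x) x.2) (h x) := by
      simp only [qs_diag]
      exact hshift
    exact hfinal.unique happ
end

section
/- Let L¹, L², L³ be normed vector spaces over ℝ or ℂ. Suppose given continuous linear maps d₁ : L¹ → L², d₂ : L² → L³, δ₁ : L² → L¹, δ₂ : L³ → L², a linear map H : L² → L², a continuous symmetric bilinear map B : L¹ × L¹ → L², a continuous bilinear map C : L² × L¹ → L³, and a constant K ≥ 0, satisfying: (i) Hodge decomposition: d₁ ∘ δ₁ + δ₂ ∘ d₂ = id − H on L²; (ii) Leibniz rule: d₂(B(μ, μ)) = 2·C(d₁ μ, μ) for all μ ∈ L¹; (iii) Jacobi identity: C(B(μ, μ), μ) = 0 for all μ ∈ L¹; (iv) the estimate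 ‖δ₂(C(x, μ))‖ ≤ K·‖x‖·‖μ‖ for all x ∈ L², μ ∈ L¹. Then for every μ ∈ L¹ with H(B(μ, μ)) = 0 and K·‖μ‖ < 1, one has d₁(μ + ½·δ₁(B(μ, μ))) = 0 if and only if d₁ μ + ½·B(μ, μ) = 0. -/
/-- dgla gauge-fixing lemma. With Hodge decomposition
`d₁ ∘ δ₁ + δ₂ ∘ d₂ = id − H`, Leibniz rule `d₂(B(μ,μ)) = 2·C(d₁ μ, μ)`, Jacobi identity
`C(B(μ,μ), μ) = 0` and the estimate `‖δ₂(C(x,μ))‖ ≤ K‖x‖‖μ‖`, for `μ` with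
`H(B(μ,μ)) = 0` and `K‖μ‖ < 1` the gauge-fixed equation `d₁(μ + ½ δ₁(B(μ,μ))) = 0` is
equivalent to the Maurer–Cartan equation `d₁ μ + ½ B(μ,μ) = 0`. -/
theorem stmt7 (𝕜 : Type*) [RCLike 𝕜]
    (L₁ L₂ L₃ : Type*)
    [NormedAddCommGroup L₁] [NormedSpace 𝕜 L₁]
    [NormedAddCommGroup L₂] [NormedSpace 𝕜 L₂]
    [NormedAddCommGroup L₃] [NormedSpace 𝕜 L₃]
    (d₁ : L₁ →L[𝕜] L₂) (d₂ : L₂ →L[𝕜] L₃)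
    (δ₁ : L₂ →L[𝕜] L₁) (δ₂ : L₃ →L[𝕜] L₂)
    (Hh : L₂ →ₗ[𝕜] L₂)
    (B : L₁ →L[𝕜] L₁ →L[𝕜] L₂) (hBsymm : ∀ x y : L₁, B x y = B y x)
    (C : L₂ →L[𝕜] L₁ →L[𝕜] L₃)
    (K : ℝ) (hK : 0 ≤ K)
    (hodge : ∀ x : L₂, d₁ (δ₁ x) + δ₂ (d₂ x) = x - Hh x)
    (leibniz : ∀ μ : L₁, d₂ (B μ μ) = 2 • C (d₁ μ) μ)
    (jacobi : ∀ μ : L₁, C (B μ μ) μ = 0)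
    (est : ∀ (x : L₂) (μ : L₁), ‖δ₂ (C x μ)‖ ≤ K * ‖x‖ * ‖μ‖)
    (μ : L₁) (hharm : Hh (B μ μ) = 0) (hsmall : K * ‖μ‖ < 1) :
    d₁ (μ + (2 : 𝕜)⁻¹ • δ₁ (B μ μ)) = 0 ↔ d₁ μ + (2 : 𝕜)⁻¹ • B μ μ = 0 := by

  set b := B μ μ with hb
  have hodgeb : d₁ (δ₁ b) = b - δ₂ (d₂ b) := by
    have h := hodge b
    rw [hharm, sub_zero] at h
    linear_combination (norm := abel) h
  have hd2b : d₂ b = (2 : 𝕜) • C (d₁ μ) μ := by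
    rw [leibniz μ, two_smul, two_smul]
  have half2 : ∀ x : L₂, (2 : 𝕜)⁻¹ • (2 : 𝕜) • x = x := fun x => by
    rw [smul_smul, inv_mul_cancel₀ (by norm_num : (2:𝕜) ≠ 0), one_smul]
  constructor
  · intro hgauge
    set E := d₁ μ + (2 : 𝕜)⁻¹ • b with hE
    have h1 : d₁ μ + (2 : 𝕜)⁻¹ • d₁ (δ₁ b) = 0 := by
      rw [← hgauge]; simp [map_add, map_smul]
    rw [hodgeb, smul_sub, hd2b, map_smul, half2] at h1
    have hEeq : E = δ₂ (C (d₁ μ) μ) := by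
      rw [hE]; linear_combination (norm := abel) h1
    have hdμ : d₁ μ = E - (2 : 𝕜)⁻¹ • b := by rw [hE]; abel
    have hCE : C (d₁ μ) μ = C E μ := by
      rw [hdμ, map_sub, map_smul]
      simp [hb, jacobi μ]
    rw [hCE] at hEeq
    have hnorm : ‖E‖ ≤ K * ‖E‖ * ‖μ‖ := by
      calc ‖E‖ = ‖δ₂ (C E μ)‖ := by rw [← hEeq]
        _ ≤ K * ‖E‖ * ‖μ‖ := est E μ
    have hE0 : E = 0 := by
      by_contra hne
      have hpos : 0 < ‖E‖ := norm_pos_iff.mpr hne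
      nlinarith [norm_nonneg μ]
    exact hE0
  · intro hMC
    have hdμ : d₁ μ = -((2 : 𝕜)⁻¹ • b) := by
      linear_combination (norm := abel) hMC
    have hCd : C (d₁ μ) μ = 0 := by
      rw [hdμ]
      simp [hb, jacobi μ]
    have hz : d₂ b = 0 := by rw [hd2b, hCd, smul_zero]
    have hδ : d₁ (δ₁ b) = b := by rw [hodgeb, hz, map_zero, sub_zero]
    rw [map_add, map_smul, hδ]
    exact hMC
end

section
/- Let R be a commutative ring in which 2 = 0 (so R is an algebra over the field 𝔽₂ = ZMod 2). Let m : R ⊗_{𝔽₂} R → R be the multiplication map and τ : R ⊗_{𝔽₂} R → R ⊗_{𝔽₂} R the swap isomorphism determined by a ⊗ b ↦ b ⊗ a. If x ∈ R ⊗_{𝔽₂} R satisfies τ(x) = x, then m(x) is a square in R, i.e. m(x) = r² for some r ∈ R. -/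
private lemma sum_sq_char2 {R : Type*} [CommRing R] (h2 : (2 : R) = 0)
    {ι : Type*} (s : Finset ι) (g : ι → R) :
    (∑ i ∈ s, g i) ^ 2 = ∑ i ∈ s, (g i) ^ 2 := by
  classical
  induction s using Finset.induction_on with
  | empty => simp
  | @insert a s ha ih =>
    rw [Finset.sum_insert ha, Finset.sum_insert ha, ← ih]
    linear_combination (g a * ∑ i ∈ s, g i) * h2

/-- Let `R` be a commutative ring with `2 = 0`, viewed as an algebra over
`𝔽₂ = ZMod 2`. If `x ∈ R ⊗_{𝔽₂} R` is invariant under the swap involution, then its image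
under the multiplication map `R ⊗_{𝔽₂} R → R` is a square in `R`. -/
theorem stmt9 (R : Type*) [CommRing R] [Algebra (ZMod 2) R] (h2 : (2 : R) = 0)
    (x : TensorProduct (ZMod 2) R R)
    (hx : TensorProduct.comm (ZMod 2) R R x = x) :
    ∃ r : R, LinearMap.mul' (ZMod 2) R x = r ^ 2 := by
  classical
  let b := Module.Basis.ofVectorSpace (ZMod 2) R
  set B := b.tensorProduct b with hB
  set c := B.repr x with hc
  -- symmetry of coefficients
  have hsym : ∀ p, c p.swap = c p := by
    intro p
    -- show the two coordinate functionals agree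
    have h1 : ∀ y : TensorProduct (ZMod 2) R R,
        B.repr ((TensorProduct.comm (ZMod 2) R R) y) p = B.repr y p.swap := by
      have : (Finsupp.lapply p ∘ₗ (B.repr.toLinearMap ∘ₗ
              (TensorProduct.comm (ZMod 2) R R).toLinearMap))
          = (Finsupp.lapply p.swap ∘ₗ B.repr.toLinearMap) := by
        apply B.ext
        rintro ⟨i, j⟩
        obtain ⟨p1, p2⟩ := p
        simp [hB, Module.Basis.tensorProduct_apply, Module.Basis.tensorProduct_repr_tmul_apply,
          Module.Basis.repr_self, Finsupp.single_apply]
        split_ifs <;> simp_all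
      intro y
      exact congrArg (fun f => f y) (congrArg DFunLike.coe this)
    have := h1 x
    rw [hx] at this
    simpa [hc] using this.symm
  have hxsum : x = c.sum fun p v => v • B p := (B.linearCombination_repr x).symm.trans
    (by rw [Finsupp.linearCombination_apply])
  have hmul : LinearMap.mul' (ZMod 2) R x = ∑ p ∈ c.support, c p • (b p.1 * b p.2) := by
    conv_lhs => rw [hxsum]
    rw [Finsupp.sum, map_sum]
    refine Finset.sum_congr rfl fun p _ => ?_
    rw [map_smul, hB, Module.Basis.tensorProduct_apply, LinearMap.mul'_apply]
  -- support is swap-invariant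
  have hsupp : ∀ p, p ∈ c.support → p.swap ∈ c.support := by
    intro p hp
    simpa [Finsupp.mem_support_iff, hsym p] using hp
  -- split into diagonal and off-diagonal
  rw [hmul]
  rw [← Finset.sum_filter_add_sum_filter_not c.support (fun p => p.1 = p.2)]
  have hoff : ∑ p ∈ c.support.filter (fun p => ¬ p.1 = p.2), c p • (b p.1 * b p.2) = 0 := by
    apply Finset.sum_involution (fun p _ => p.swap)
    · intro p hp
      rw [hsym p, Prod.fst_swap, Prod.snd_swap, mul_comm (b p.2) (b p.1), ← two_mul, h2,
        zero_mul]
    · intro p hp _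
      simp only [Finset.mem_filter] at hp
      intro h
      rw [Prod.ext_iff] at h
      exact hp.2 h.1.symm
    · intro p _
      simp
    · intro p hp
      simp only [Finset.mem_filter, Finsupp.mem_support_iff] at hp ⊢
      refine ⟨?_, fun h => hp.2 h.symm⟩
      rw [hsym p]; exact hp.1
  rw [hoff, add_zero]
  -- diagonal sum is a sum of squares
  refine ⟨∑ p ∈ c.support.filter (fun p => p.1 = p.2), c p • b p.1, ?_⟩
  rw [sum_sq_char2 h2]
  refine Finset.sum_congr rfl fun p hp => ?_
  simp only [Finset.mem_filter] at hp
  have hz : ∀ z : ZMod 2, z ^ 2 = z := by decide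
  rw [smul_pow, hz (c p), ← hp.2, sq]
end
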